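/- arXiv:1201.5884 — 2 statements merged into one kernel-verified Lean document; each statement's English description precedes it below -/
import Mathlib

section
/- Let ξ₁,…,ξ_N and λ₁,…,λ_N be complex numbers such that all the quantities sinh(ξ_k − λ_j), sinh(ξ_k + λ_j + η), sinh(ξ_a − ξ_k), sinh(ξ_k + ξ_a + η) (a ≠ k), sinh(λ_j − λ_a), sinh(λ_j + λ_a + η) (a ≠ j) are nonzero. Define the N×N Cauchy-type matrix C with entries C_{kj} = 1/(sinh(ξ_k − λ_j) sinh(ξ_k + λ_j + η)). Then C is invertible and its inverse has entries (C⁻¹)_{jk} = [1/(sinh(ξ_k − λ_j) sinh(ξ_k + λ_j + η))] · ∏_{a=1}^N [sinh(ξ_a − λ_j) sinh(λ_j + ξ_a + η) sinh(ξ_k − λ_a) sinh(λ_a + ξ_k + η)] / ( ∏_{a ≠ k} [sinh(ξ_a − ξ_k) sinh(ξ_k + ξ_a + η)] · ∏_{a ≠ j} [sinh(λ_j − λ_a) sinh(λ_j + λ_a + η)] ). -/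
open Complex Finset Polynomial

lemma lag_eval (N : ℕ) (y : Fin N → ℂ) (hy : Function.Injective y)
    (P : Polynomial ℂ) (hP : P.degree < N) (z : ℂ) :
    P.eval z = ∑ j, P.eval (y j) * ∏ a ∈ univ.erase j, ((y j - y a)⁻¹ * (z - y a)) := by
  have hinj : Set.InjOn y (univ : Finset (Fin N)) := fun a _ b _ h => hy h
  have h := Lagrange.eq_interpolate (f := P) hinj (by simpa using hP)
  conv_lhs => rw [h]
  rw [Lagrange.interpolate_apply, Polynomial.eval_finset_sum]
  refine Finset.sum_congr rfl fun j _ => ?_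
  simp [Lagrange.basis, Lagrange.basisDivisor, Polynomial.eval_prod]

lemma cauchy_mul_eq_one (N : ℕ) (x y : Fin N → ℂ)
    (hxy : ∀ k j, x k - y j ≠ 0)
    (hx : ∀ a k, a ≠ k → x a - x k ≠ 0)
    (hy : ∀ a j, a ≠ j → y j - y a ≠ 0) :
    (Matrix.of fun k j => (x k - y j)⁻¹) *
      (Matrix.of fun j i => (x i - y j)⁻¹ * (∏ a, ((x a - y j) * (x i - y a))) /
        ((∏ a ∈ univ.erase i, (x a - x i)) * (∏ a ∈ univ.erase j, (y j - y a)))) = 1 := by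
  have hyinj : Function.Injective y := by
    intro a b hab
    by_contra hne
    exact hy b a (Ne.symm hne) (by rw [hab]; ring)
  ext k i
  rw [Matrix.mul_apply]
  simp only [Matrix.of_apply]
  -- auxiliary nonzero facts
  have hPi : (∏ a ∈ univ.erase i, (x a - x i)) ≠ 0 :=
    Finset.prod_ne_zero_iff.mpr fun a ha => hx a i (Finset.ne_of_mem_erase ha)
  have hK : (∏ a, (x k - y a)) ≠ 0 :=
    Finset.prod_ne_zero_iff.mpr fun a _ => hxy k a
  have hB : (∏ a, (x i - y a)) ≠ 0 :=
    Finset.prod_ne_zero_iff.mpr fun a _ => hxy i a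
  -- the polynomial
  set P : Polynomial ℂ := ∏ a ∈ univ.erase i, (Polynomial.C (x a) - Polynomial.X) with hPdef
  have hPdeg : P.degree < N := by
    have h1 : P.degree ≤ (univ.erase i).card • (1 : WithBot ℕ) := by
      apply le_trans (Polynomial.degree_prod_le _ _)
      apply Finset.sum_le_card_nsmul
      intro a _
      have : Polynomial.C (x a) - Polynomial.X = -(Polynomial.X - Polynomial.C (x a)) := by ring
      rw [this, Polynomial.degree_neg, Polynomial.degree_X_sub_C]
    have hcard : (univ.erase i).card = N - 1 := by
      rw [Finset.card_erase_of_mem (Finset.mem_univ i), Finset.card_univ, Fintype.card_fin]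
    rw [hcard] at h1
    refine lt_of_le_of_lt h1 ?_
    have hNpos : 0 < N := i.pos
    simp only [nsmul_eq_mul, mul_one]
    exact_mod_cast Nat.cast_lt.mpr (by omega : N - 1 < N)
  have hPeval : ∀ z : ℂ, P.eval z = ∏ a ∈ univ.erase i, (x a - z) := by
    intro z; rw [hPdef, Polynomial.eval_prod]; simp
  have key := lag_eval N y hyinj P hPdeg (x k)
  -- rewrite each term of the matrix product sum
  have hterm : ∀ j : Fin N,
      (x k - y j)⁻¹ * ((x i - y j)⁻¹ * (∏ a, ((x a - y j) * (x i - y a))) /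
        ((∏ a ∈ univ.erase i, (x a - x i)) * (∏ a ∈ univ.erase j, (y j - y a))))
      = ((∏ a, (x i - y a)) / ((∏ a ∈ univ.erase i, (x a - x i)) * (∏ a, (x k - y a)))) *
        (P.eval (y j) * ∏ a ∈ univ.erase j, ((y j - y a)⁻¹ * (x k - y a))) := by
    intro j
    have hQj : (∏ a ∈ univ.erase j, (y j - y a)) ≠ 0 :=
      Finset.prod_ne_zero_iff.mpr fun a ha => hy a j (Finset.ne_of_mem_erase ha)
    have hKj : (∏ a ∈ univ.erase j, (x k - y a)) ≠ 0 :=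
      Finset.prod_ne_zero_iff.mpr fun a _ => hxy k a
    have hs : x k - y j ≠ 0 := hxy k j
    have ht : x i - y j ≠ 0 := hxy i j
    have hsplit : (∏ a, ((x a - y j) * (x i - y a)))
        = ((x i - y j) * P.eval (y j)) * (∏ a, (x i - y a)) := by
      rw [Finset.prod_mul_distrib, hPeval]
      congr 1
      exact (Finset.mul_prod_erase univ (fun a => x a - y j) (Finset.mem_univ i)).symm
    have hsplit2 : (∏ a, (x k - y a)) = (x k - y j) * ∏ a ∈ univ.erase j, (x k - y a) :=
      (Finset.mul_prod_erase univ (fun a => x k - y a) (Finset.mem_univ j)).symm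
    rw [hsplit, Finset.prod_mul_distrib, Finset.prod_inv_distrib, hsplit2]
    field_simp
  rw [Finset.sum_congr rfl fun j _ => hterm j, ← Finset.mul_sum, ← key, hPeval]
  by_cases hki : k = i
  · subst hki
    rw [Matrix.one_apply_eq]
    field_simp
  · rw [Matrix.one_apply_ne hki]
    have : (∏ a ∈ univ.erase i, (x a - x k)) = 0 :=
      Finset.prod_eq_zero (Finset.mem_erase.mpr ⟨hki, Finset.mem_univ k⟩) (sub_self (x k))
    rw [this]
    simp

lemma alg_aux (s Pi Pk Qj c : ℂ) (hs : s ≠ 0) (hPk : Pk ≠ 0) (hQj : Qj ≠ 0) (hc : c ≠ 0) :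
    (1 / s * Pi) / (Pk * Qj)
      = 2⁻¹ * ((2 * s)⁻¹ * (c * c * 2 * 2 * Pi) / ((c * Pk) * (c * Qj))) := by
  field_simp

lemma cosh_sub_cosh' (u v : ℂ) :
    Complex.cosh u - Complex.cosh v = 2 * Complex.sinh ((u + v) / 2) * Complex.sinh ((u - v) / 2) := by
  have h1 := Complex.cosh_add ((u + v) / 2) ((u - v) / 2)
  have h2 := Complex.cosh_sub ((u + v) / 2) ((u - v) / 2)
  have e1 : (u + v) / 2 + (u - v) / 2 = u := by ring
  have e2 : (u + v) / 2 - (u - v) / 2 = v := by ring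
  rw [e1] at h1; rw [e2] at h2
  rw [h1, h2]; ring

/-- Explicit inverse of the hyperbolic Cauchy matrix
`C_{kj} = 1/(sinh(ξ_k − λ_j) sinh(ξ_k + λ_j + η))`. -/
theorem stmt5 (N : ℕ) (η : ℂ) (ξ lam : Fin N → ℂ)
    (h1 : ∀ k j, Complex.sinh (ξ k - lam j) ≠ 0)
    (h2 : ∀ k j, Complex.sinh (ξ k + lam j + η) ≠ 0)
    (h3 : ∀ a k, a ≠ k → Complex.sinh (ξ a - ξ k) ≠ 0)
    (h4 : ∀ a k, a ≠ k → Complex.sinh (ξ k + ξ a + η) ≠ 0)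
    (h5 : ∀ a j, a ≠ j → Complex.sinh (lam j - lam a) ≠ 0)
    (h6 : ∀ a j, a ≠ j → Complex.sinh (lam j + lam a + η) ≠ 0) :
    let C : Matrix (Fin N) (Fin N) ℂ :=
      Matrix.of fun k j => 1 / (Complex.sinh (ξ k - lam j) * Complex.sinh (ξ k + lam j + η))
    let D : Matrix (Fin N) (Fin N) ℂ :=
      Matrix.of fun j k =>
        (1 / (Complex.sinh (ξ k - lam j) * Complex.sinh (ξ k + lam j + η))) *
        (∏ a, (Complex.sinh (ξ a - lam j) * Complex.sinh (lam j + ξ a + η) *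
                Complex.sinh (ξ k - lam a) * Complex.sinh (lam a + ξ k + η))) /
        ((∏ a ∈ Finset.univ.erase k, (Complex.sinh (ξ a - ξ k) * Complex.sinh (ξ k + ξ a + η))) *
         (∏ a ∈ Finset.univ.erase j, (Complex.sinh (lam j - lam a) * Complex.sinh (lam j + lam a + η))))
    C * D = 1 ∧ D * C = 1 := by
  intro C D
  set X : Fin N → ℂ := fun k => Complex.cosh (2 * ξ k + η) with hXdef
  set Y : Fin N → ℂ := fun j => Complex.cosh (2 * lam j + η) with hYdef
  have hXY : ∀ k j, X k - Y j =
      2 * (Complex.sinh (ξ k - lam j) * Complex.sinh (ξ k + lam j + η)) := by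
    intro k j
    rw [hXdef, hYdef]
    dsimp only
    rw [cosh_sub_cosh']
    have e1 : (2 * ξ k + η + (2 * lam j + η)) / 2 = ξ k + lam j + η := by ring
    have e2 : (2 * ξ k + η - (2 * lam j + η)) / 2 = ξ k - lam j := by ring
    rw [e1, e2]; ring
  have hXX : ∀ a k, X a - X k =
      2 * (Complex.sinh (ξ a - ξ k) * Complex.sinh (ξ k + ξ a + η)) := by
    intro a k
    rw [hXdef]
    dsimp only
    rw [cosh_sub_cosh']
    have e1 : (2 * ξ a + η + (2 * ξ k + η)) / 2 = ξ k + ξ a + η := by ring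
    have e2 : (2 * ξ a + η - (2 * ξ k + η)) / 2 = ξ a - ξ k := by ring
    rw [e1, e2]; ring
  have hYY : ∀ j a, Y j - Y a =
      2 * (Complex.sinh (lam j - lam a) * Complex.sinh (lam j + lam a + η)) := by
    intro j a
    rw [hYdef]
    dsimp only
    rw [cosh_sub_cosh']
    have e1 : (2 * lam j + η + (2 * lam a + η)) / 2 = lam j + lam a + η := by ring
    have e2 : (2 * lam j + η - (2 * lam a + η)) / 2 = lam j - lam a := by ring
    rw [e1, e2]; ring
  have hxy' : ∀ k j, X k - Y j ≠ 0 := fun k j => by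
    rw [hXY]; exact mul_ne_zero two_ne_zero (mul_ne_zero (h1 k j) (h2 k j))
  have hx' : ∀ a k, a ≠ k → X a - X k ≠ 0 := fun a k hak => by
    rw [hXX]; exact mul_ne_zero two_ne_zero (mul_ne_zero (h3 a k hak) (h4 a k hak))
  have hy' : ∀ a j, a ≠ j → Y j - Y a ≠ 0 := fun a j haj => by
    rw [hYY]; exact mul_ne_zero two_ne_zero (mul_ne_zero (h5 a j haj) (h6 a j haj))
  set C' : Matrix (Fin N) (Fin N) ℂ := Matrix.of fun k j => (X k - Y j)⁻¹ with hC'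
  set D' : Matrix (Fin N) (Fin N) ℂ := Matrix.of fun j i =>
      (X i - Y j)⁻¹ * (∏ a, ((X a - Y j) * (X i - Y a))) /
        ((∏ a ∈ univ.erase i, (X a - X i)) * (∏ a ∈ univ.erase j, (Y j - Y a))) with hD'
  have hCD' : C' * D' = 1 := cauchy_mul_eq_one N X Y hxy' hx' hy'
  have hCeq : C = (2 : ℂ) • C' := by
    ext k j
    rw [Matrix.smul_apply, hC']
    simp only [C, Matrix.of_apply]
    rw [hXY]
    have hne := mul_ne_zero (h1 k j) (h2 k j)
    field_simp
    rw [smul_eq_mul]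
    field_simp
  have hDeq : D = (2 : ℂ)⁻¹ • D' := by
    ext j k
    rw [Matrix.smul_apply, hD']
    simp only [D, Matrix.of_apply]
    have hNpos : 0 < N := k.pos
    have hc : (2 : ℂ) ^ (N - 1) ≠ 0 := pow_ne_zero _ two_ne_zero
    have hprod : (∏ a, ((X a - Y j) * (X k - Y a)))
        = ((2:ℂ)^(N-1) * (2:ℂ)^(N-1) * 2 * 2) *
          ∏ a, (Complex.sinh (ξ a - lam j) * Complex.sinh (lam j + ξ a + η) *
                Complex.sinh (ξ k - lam a) * Complex.sinh (lam a + ξ k + η)) := by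
      have step : ∀ a : Fin N, (X a - Y j) * (X k - Y a)
          = 4 * (Complex.sinh (ξ a - lam j) * Complex.sinh (lam j + ξ a + η) *
                Complex.sinh (ξ k - lam a) * Complex.sinh (lam a + ξ k + η)) := by
        intro a
        rw [hXY a j, hXY k a]
        have c1 : Complex.sinh (lam j + ξ a + η) = Complex.sinh (ξ a + lam j + η) := by
          rw [add_comm (lam j) (ξ a)]
        have c2 : Complex.sinh (lam a + ξ k + η) = Complex.sinh (ξ k + lam a + η) := by
          rw [add_comm (lam a) (ξ k)]
        rw [c1, c2]; ring
      rw [Finset.prod_congr rfl fun a _ => step a, Finset.prod_mul_distrib,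
        Finset.prod_const, Finset.card_univ, Fintype.card_fin]
      have e4 : (4 : ℂ) ^ N = (2:ℂ)^(N-1) * (2:ℂ)^(N-1) * 2 * 2 := by
        have hN1 : N - 1 + 1 = N := Nat.succ_pred_eq_of_pos hNpos
        calc (4 : ℂ) ^ N = (2 * 2 : ℂ) ^ N := by norm_num
          _ = (2:ℂ)^N * (2:ℂ)^N := mul_pow 2 2 N
          _ = ((2:ℂ)^(N-1) * 2) * ((2:ℂ)^(N-1) * 2) := by rw [← pow_succ, hN1]
          _ = (2:ℂ)^(N-1) * (2:ℂ)^(N-1) * 2 * 2 := by ring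
      rw [e4]
    have hprodX : (∏ a ∈ univ.erase k, (X a - X k))
        = (2:ℂ)^(N-1) *
          ∏ a ∈ univ.erase k, (Complex.sinh (ξ a - ξ k) * Complex.sinh (ξ k + ξ a + η)) := by
      rw [Finset.prod_congr rfl fun a _ => hXX a k, Finset.prod_mul_distrib,
        Finset.prod_const, Finset.card_erase_of_mem (Finset.mem_univ k),
        Finset.card_univ, Fintype.card_fin]
    have hprodY : (∏ a ∈ univ.erase j, (Y j - Y a))
        = (2:ℂ)^(N-1) *
          ∏ a ∈ univ.erase j, (Complex.sinh (lam j - lam a) * Complex.sinh (lam j + lam a + η)) := by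
      rw [Finset.prod_congr rfl fun a _ => hYY j a, Finset.prod_mul_distrib,
        Finset.prod_const, Finset.card_erase_of_mem (Finset.mem_univ j),
        Finset.card_univ, Fintype.card_fin]
    rw [hXY k j, hprod, hprodX, hprodY]
    have hne : Complex.sinh (ξ k - lam j) * Complex.sinh (ξ k + lam j + η) ≠ 0 :=
      mul_ne_zero (h1 k j) (h2 k j)
    have hPk : (∏ a ∈ univ.erase k, (Complex.sinh (ξ a - ξ k) * Complex.sinh (ξ k + ξ a + η))) ≠ 0 :=
      Finset.prod_ne_zero_iff.mpr fun a ha =>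
        mul_ne_zero (h3 a k (Finset.ne_of_mem_erase ha)) (h4 a k (Finset.ne_of_mem_erase ha))
    have hQj : (∏ a ∈ univ.erase j,
        (Complex.sinh (lam j - lam a) * Complex.sinh (lam j + lam a + η))) ≠ 0 :=
      Finset.prod_ne_zero_iff.mpr fun a ha =>
        mul_ne_zero (h5 a j (Finset.ne_of_mem_erase ha)) (h6 a j (Finset.ne_of_mem_erase ha))
    exact alg_aux _ _ _ _ _ hne hPk hQj hc
  constructor
  · rw [hCeq, hDeq, Matrix.smul_mul, Matrix.mul_smul, hCD', smul_smul]
    norm_num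
  · rw [hCeq, hDeq, Matrix.smul_mul, Matrix.mul_smul, mul_eq_one_comm.mp hCD', smul_smul]
    norm_num
end

section
/- Under the same genericity assumptions as for the hyperbolic Cauchy matrix, the determinant of the N×N matrix C with entries C_{kj} = 1/(sinh(ξ_k − λ_j) sinh(ξ_k + λ_j + η)) equals ∏_{a<b} [sinh(ξ_a − ξ_b) sinh(ξ_a + ξ_b + η) sinh(λ_b − λ_a) sinh(λ_a + λ_b + η)] / ∏_{a,b=1}^N [sinh(ξ_a − λ_b) sinh(ξ_a + λ_b + η)]. -/
open Complex Finset

lemma det_eq_of_forall_col_eq_smul_add_const' {n : Type*} [DecidableEq n] [Fintype n]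
    {A B : Matrix n n ℂ} (c : n → ℂ) (k : n)
    (hk : c k = 0) (h : ∀ i j, A i j = B i j + c j * B i k) : A.det = B.det := by
  rw [← Matrix.det_transpose A, ← Matrix.det_transpose B]
  exact Matrix.det_eq_of_forall_row_eq_smul_add_const c k hk fun i j => h j i

lemma cauchy_det : ∀ (n : ℕ) (x y : Fin n → ℂ), (∀ i j, x i - y j ≠ 0) →
    Matrix.det (Matrix.of fun i j => (x i - y j)⁻¹)
      = (∏ i : Fin n, ∏ j ∈ Finset.univ.filter (fun j => i < j), ((x i - x j) * (y j - y i)))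
        / ∏ i : Fin n, ∏ j : Fin n, (x i - y j) := by
  intro n
  induction n with
  | zero =>
    intro x y h
    simp [Matrix.det_eq_one_of_card_eq_zero (Fintype.card_fin 0)]
  | succ n ih =>
    intro x y h
    -- Step 1: row operations
    set B : Matrix (Fin (n+1)) (Fin (n+1)) ℂ := Matrix.of fun i j =>
      Matrix.vecCons ((x 0 - y j)⁻¹)
        (fun i' => (x 0 - x i'.succ) * ((x 0 - y j)⁻¹ * (x i'.succ - y j)⁻¹)) i with hB
    have step1 : Matrix.det (Matrix.of fun i j : Fin (n+1) => (x i - y j)⁻¹) = B.det := by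
      apply Matrix.det_eq_of_forall_row_eq_smul_add_const (Matrix.vecCons 0 1) 0 (Matrix.cons_val_zero _ _)
      intro i j
      refine Fin.cases ?_ (fun i' => ?_) i
      · simp [hB]
      · simp only [hB, Matrix.of_apply, Matrix.cons_val_succ, Matrix.cons_val_zero, Pi.one_apply, one_mul]
        have ha := h 0 j
        have hb := h i'.succ j
        field_simp
        ring
    -- Step 2: factor (x 0 - y j)⁻¹ from each column
    set M : Matrix (Fin (n+1)) (Fin (n+1)) ℂ := Matrix.of fun i j =>
      Matrix.vecCons (1 : ℂ) (fun i' => (x 0 - x i'.succ) * (x i'.succ - y j)⁻¹) i with hM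
    have step2 : B.det = (∏ j : Fin (n+1), (x 0 - y j)⁻¹) * M.det := by
      rw [show B = Matrix.of fun i j => (x 0 - y j)⁻¹ * M i j from ?_]
      · exact Matrix.det_mul_row _ _
      · ext i j
        refine Fin.cases ?_ (fun i' => ?_) i <;> simp [hB, hM] <;> ring
    -- Step 3: factor (x 0 - x i.succ) from each row i.succ
    set M' : Matrix (Fin (n+1)) (Fin (n+1)) ℂ := Matrix.of fun i j =>
      Matrix.vecCons (1 : ℂ) (fun i' => (x i'.succ - y j)⁻¹) i with hM'
    have step3 : M.det = (∏ i : Fin n, (x 0 - x i.succ)) * M'.det := by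
      rw [show M = Matrix.of fun i j =>
            (Matrix.vecCons (1 : ℂ) (fun i' => x 0 - x i'.succ) i) * M' i j from ?_]
      · rw [Matrix.det_mul_column, Fin.prod_univ_succ]
        simp
      · ext i j
        refine Fin.cases ?_ (fun i' => ?_) i <;> simp [hM, hM']
    -- Step 4: column operations
    set P : Matrix (Fin (n+1)) (Fin (n+1)) ℂ := Matrix.of fun i j =>
      Matrix.vecCons (Matrix.vecCons (1 : ℂ) (fun _ : Fin n => (0:ℂ)) j)
        (fun i' => Matrix.vecCons ((x i'.succ - y 0)⁻¹)
          (fun j' => (y j'.succ - y 0) * ((x i'.succ - y 0)⁻¹ * (x i'.succ - y j'.succ)⁻¹)) j) i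
      with hP
    have step4 : M'.det = P.det := by
      apply det_eq_of_forall_col_eq_smul_add_const' (Matrix.vecCons 0 1) 0 (Matrix.cons_val_zero _ _)
      intro i j
      refine Fin.cases ?_ (fun j' => ?_) j
      · simp only [Matrix.cons_val_zero, zero_mul, add_zero]
        refine Fin.cases ?_ (fun i' => ?_) i <;> simp [hM', hP]
      · refine Fin.cases ?_ (fun i' => ?_) i
        · simp [hM', hP]
        · simp only [hM', hP, Matrix.of_apply, Matrix.cons_val_succ, Matrix.cons_val_zero, Pi.one_apply, one_mul]
          have ha := h i'.succ 0
          have hb := h i'.succ j'.succ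
          field_simp
          ring
    -- Step 5: expand along row 0
    have step5 : P.det = (P.submatrix Fin.succ Fin.succ).det := by
      rw [Matrix.det_succ_row_zero, Fin.sum_univ_succ]
      simp [hP, Fin.succAbove_zero]
    -- Step 6: factor submatrix
    have step6 : (P.submatrix Fin.succ Fin.succ).det
        = (∏ i : Fin n, (x i.succ - y 0)⁻¹) * ((∏ j : Fin n, (y j.succ - y 0)) *
            Matrix.det (Matrix.of fun i j : Fin n => (x i.succ - y j.succ)⁻¹)) := by
      rw [show P.submatrix Fin.succ Fin.succ = Matrix.of fun i j : Fin n =>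
            (x i.succ - y 0)⁻¹ * ((y j.succ - y 0) * (x i.succ - y j.succ)⁻¹) from ?_]
      · refine (Matrix.det_mul_column (fun i : Fin n => (x i.succ - y 0)⁻¹)
          (Matrix.of fun i j : Fin n => (y j.succ - y 0) * (x i.succ - y j.succ)⁻¹)).trans ?_
        congr 1
        exact Matrix.det_mul_row (fun j => y j.succ - y 0)
          (Matrix.of fun i j : Fin n => (x i.succ - y j.succ)⁻¹)
      · ext i j
        simp [hP]
        ring
    -- IH
    have hih := ih (fun i => x i.succ) (fun j => y j.succ) (fun i j => h _ _)
    -- nonzeroness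
    have hD : (∏ i : Fin n, ∏ j : Fin n, (x i.succ - y j.succ)) ≠ 0 :=
      Finset.prod_ne_zero_iff.mpr fun i _ => Finset.prod_ne_zero_iff.mpr fun j _ => h _ _
    have hP1 : (∏ j : Fin (n+1), (x 0 - y j)) ≠ 0 :=
      Finset.prod_ne_zero_iff.mpr fun j _ => h _ _
    have hP2 : (∏ i : Fin n, (x i.succ - y 0)) ≠ 0 :=
      Finset.prod_ne_zero_iff.mpr fun i _ => h _ _
    -- put it together
    have hfilt : ∀ (m : ℕ) (a : Fin m),
        Finset.univ.filter (fun j => a < j) = Finset.Ioi a := by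
      intro m a; ext j; simp
    rw [step1, step2, step3, step4, step5, step6, hih]
    simp only [hfilt]
    rw [Fin.prod_univ_succ (fun i => ∏ j ∈ Finset.Ioi i, ((x i - x j) * (y j - y i)))]
    rw [Fin.prod_Ioi_zero]
    simp only [Fin.prod_Ioi_succ]
    rw [Fin.prod_univ_succ (fun i => ∏ j : Fin (n+1), (x i - y j))]
    simp only [Fin.prod_univ_succ (fun j => (x (Fin.succ _) - y j))]
    rw [Finset.prod_mul_distrib, Finset.prod_mul_distrib, Finset.prod_inv_distrib,
      Finset.prod_inv_distrib]
    field_simp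

lemma sinh_mul_sinh_key (p q η : ℂ) : Complex.sinh (p - q) * Complex.sinh (p + q + η)
    = Complex.cosh (2 * p + η) / 2 - Complex.cosh (2 * q + η) / 2 := by
  have h1 : 2 * p + η = (p - q) + (p + q + η) := by ring
  have h2 : 2 * q + η = -((p - q) - (p + q + η)) := by ring
  rw [h1, h2, Complex.cosh_neg, Complex.cosh_add (p - q) (p + q + η),
    Complex.cosh_sub (p - q) (p + q + η)]
  ring

/-- Determinant of the hyperbolic Cauchy matrix
`C_{kj} = 1/(sinh(ξ_k − λ_j) sinh(ξ_k + λ_j + η))`. -/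
theorem stmt6 (N : ℕ) (η : ℂ) (ξ lam : Fin N → ℂ)
    (h1 : ∀ a b, Complex.sinh (ξ a - lam b) ≠ 0)
    (h2 : ∀ a b, Complex.sinh (ξ a + lam b + η) ≠ 0) :
    Matrix.det (Matrix.of fun k j : Fin N =>
        1 / (Complex.sinh (ξ k - lam j) * Complex.sinh (ξ k + lam j + η)))
      = (∏ a : Fin N, ∏ b ∈ Finset.univ.filter (fun b => a < b),
            (Complex.sinh (ξ a - ξ b) * Complex.sinh (ξ a + ξ b + η) *
             Complex.sinh (lam b - lam a) * Complex.sinh (lam a + lam b + η)))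
        / ∏ a : Fin N, ∏ b : Fin N,
            (Complex.sinh (ξ a - lam b) * Complex.sinh (ξ a + lam b + η)) := by
  set x : Fin N → ℂ := fun a => Complex.cosh (2 * ξ a + η) / 2 with hx
  set y : Fin N → ℂ := fun b => Complex.cosh (2 * lam b + η) / 2 with hy
  have key1 : ∀ a b, Complex.sinh (ξ a - lam b) * Complex.sinh (ξ a + lam b + η)
      = x a - y b := fun a b => sinh_mul_sinh_key (ξ a) (lam b) η
  have key2 : ∀ a b, Complex.sinh (ξ a - ξ b) * Complex.sinh (ξ a + ξ b + η)
      = x a - x b := fun a b => sinh_mul_sinh_key (ξ a) (ξ b) η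
  have key3 : ∀ a b, Complex.sinh (lam b - lam a) * Complex.sinh (lam a + lam b + η)
      = y b - y a := by
    intro a b
    rw [show lam a + lam b + η = lam b + lam a + η by ring]
    exact sinh_mul_sinh_key (lam b) (lam a) η
  have key4 : ∀ a b, Complex.sinh (ξ a - ξ b) * Complex.sinh (ξ a + ξ b + η) *
      Complex.sinh (lam b - lam a) * Complex.sinh (lam a + lam b + η)
      = (x a - x b) * (y b - y a) := by
    intro a b
    calc Complex.sinh (ξ a - ξ b) * Complex.sinh (ξ a + ξ b + η) *
        Complex.sinh (lam b - lam a) * Complex.sinh (lam a + lam b + η)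
        = (Complex.sinh (ξ a - ξ b) * Complex.sinh (ξ a + ξ b + η)) *
          (Complex.sinh (lam b - lam a) * Complex.sinh (lam a + lam b + η)) := by ring
      _ = (x a - x b) * (y b - y a) := by rw [key2, key3]
  have hxy : ∀ a b, x a - y b ≠ 0 := by
    intro a b
    rw [← key1]
    exact mul_ne_zero (h1 a b) (h2 a b)
  simp_rw [key1, key4, one_div]
  exact cauchy_det N x y hxy
end
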